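/- Suppose u ∈ ℝ[[λ]][[t_0, t_1, t_2, …]] satisfies the string equation u = Σ_{k≥1} t_k R_k[u] + t_0 (the infinite sum being well-defined coefficientwise). Then ∂/∂t_0 ( Σ_{n≥0} (t_n − δ_{n,1}) T_n[u] ) = u, where δ_{n,1} is the Kronecker delta. (Equivalently, λ² ∂F/∂t_0 − Σ_{n≥0}(t_n − δ_{n,1}) T_n[u] is independent of t_0 for any F with λ² ∂²F/∂t_0² = u.) -/

import Mathlib

open MvPolynomial

/-- The derivation `∂ₓ = Σ_{k≥0} u_{k+1} ∂/∂u_k` on `A = ℝ[u₀, u₁, …]`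
(the sum is finite on each polynomial). -/
noncomputable def dx (f : MvPolynomial ℕ ℝ) : MvPolynomial ℕ ℝ :=
  ∑ᶠ k : ℕ, X (k + 1) * pderiv k f

/-- The λ-linear extension of `∂ₓ` to `A[λ]` (acting on coefficients). -/
noncomputable def dxP (p : Polynomial (MvPolynomial ℕ ℝ)) :
    Polynomial (MvPolynomial ℕ ℝ) :=
  p.sum fun n a => Polynomial.C (dx a) * Polynomial.X ^ n

/-- `p ∈ A[λ]` has zero constant term: the constant term (in the variables `u_k`)
of every `λ`-coefficient of `p` vanishes. -/
def NoConst (p : Polynomial (MvPolynomial ℕ ℝ)) : Prop :=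
  ∀ i : ℕ, coeff 0 (p.coeff i) = 0

/-- `R : ℕ → A[λ]` is the sequence of Gelfand–Dickey polynomials:
`R 0 = 1`, each `R n` for `n ≥ 1` has zero constant term, and the Lenard recursion
`(2n+1) ∂ₓ R_{n+1} = u₁ R_n + 2 u₀ ∂ₓ R_n + (λ²/4) ∂ₓ³ R_n` holds. -/
def IsGD (R : ℕ → Polynomial (MvPolynomial ℕ ℝ)) : Prop :=
  R 0 = 1 ∧ (∀ n : ℕ, 1 ≤ n → NoConst (R n)) ∧
  ∀ n : ℕ,
    Polynomial.C (MvPolynomial.C (2 * (n : ℝ) + 1)) * dxP (R (n + 1)) =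
      Polynomial.C (X 1) * R n
      + Polynomial.C (MvPolynomial.C 2 * X 0) * dxP (R n)
      + Polynomial.C (MvPolynomial.C (1 / 4 : ℝ)) * Polynomial.X ^ 2
          * dxP (dxP (dxP (R n)))

/-- `T : ℕ → A[λ]` is the sequence of antiderivatives: each `T n` has zero
constant term and `∂ₓ T_n = u₁ · R_n`. -/
def IsT (R T : ℕ → Polynomial (MvPolynomial ℕ ℝ)) : Prop :=
  ∀ n : ℕ, NoConst (T n) ∧ dxP (T n) = Polynomial.C (X 1) * R n

/-- Formal partial derivative `∂/∂t₀` on `MvPowerSeries ℕ S`, defined coefficientwise: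
`(∂f/∂t₀)` has `m`-th coefficient `(m₀+1)` times the `(m + e₀)`-th coefficient of `f`. -/
noncomputable def D0 {S : Type*} [CommSemiring S] (f : MvPowerSeries ℕ S) :
    MvPowerSeries ℕ S :=
  fun m => (m 0 + 1 : ℕ) • MvPowerSeries.coeff (R := S) (m + Finsupp.single 0 1) f

/-- Substitution `P ↦ P[u]`: substitute `u_k ↦ v k` and `λ ↦ lam` in `P ∈ A[λ]`. -/
noncomputable def substP {S : Type*} [CommRing S] [Algebra ℝ S]
    (lam : S) (v : ℕ → S) (P : Polynomial (MvPolynomial ℕ ℝ)) : S :=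
  Polynomial.eval₂ (MvPolynomial.aeval v).toRingHom lam P

/-- `P[u]` for `u ∈ ℝ[[λ]][[t₀,t₁,…]]`: substitute `u_k ↦ ∂_{t₀}^k u` and `λ ↦ λ`. -/
noncomputable def sb (u : MvPowerSeries ℕ (PowerSeries ℝ))
    (P : Polynomial (MvPolynomial ℕ ℝ)) : MvPowerSeries ℕ (PowerSeries ℝ) :=
  substP (MvPowerSeries.C (σ := ℕ) (R := PowerSeries ℝ) PowerSeries.X) (fun k => D0^[k] u) P

-- ===== auxiliary lemmas =====

lemma dx_support (f : MvPolynomial ℕ ℝ) :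
    (Function.support fun k => X (k + 1) * pderiv k f) ⊆ ↑f.vars := by
  intro k hk
  by_contra hkv
  apply hk
  show X (k + 1) * pderiv k f = 0
  rw [pderiv_eq_zero_of_notMem_vars hkv, mul_zero]

lemma dx_supp_fin (f : MvPolynomial ℕ ℝ) :
    (Function.support fun k => X (k + 1) * pderiv k f).Finite :=
  f.vars.finite_toSet.subset (dx_support f)

lemma dx_add (p q : MvPolynomial ℕ ℝ) : dx (p + q) = dx p + dx q := by
  unfold dx
  rw [← finsum_add_distrib (dx_supp_fin p) (dx_supp_fin q)]
  congr 1; funext k; rw [map_add, mul_add]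

lemma dx_C (r : ℝ) : dx (C r) = 0 := by
  unfold dx
  have : ∀ k : ℕ, X (k + 1) * pderiv k (C r : MvPolynomial ℕ ℝ) = 0 := by
    intro k; rw [pderiv_C, mul_zero]
  simp [this]

lemma dx_zero : dx 0 = 0 := by simpa using dx_C 0
lemma dx_one : dx 1 = 0 := by simpa using dx_C 1

lemma dx_sub (p q : MvPolynomial ℕ ℝ) : dx (p - q) = dx p - dx q := by
  have h := dx_add (p - q) q
  rw [sub_add_cancel] at h
  rw [h]; ring

lemma dx_mul_X (p : MvPolynomial ℕ ℝ) (i : ℕ) :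
    dx (p * X i) = dx p * X i + p * X (i + 1) := by
  unfold dx
  have h1 : ∀ k : ℕ, X (k + 1) * pderiv k (p * X i) =
      X (k + 1) * pderiv k p * X i + (if k = i then X (i + 1) * p else 0) := by
    intro k
    rw [pderiv_mul]
    by_cases hk : k = i
    · subst hk; rw [pderiv_X_self, if_pos rfl]; ring
    · rw [pderiv_X_of_ne (Ne.symm hk), if_neg hk]; ring
  calc (∑ᶠ k : ℕ, X (k + 1) * pderiv k (p * X i))
      = ∑ᶠ k : ℕ, (X (k + 1) * pderiv k p * X i + (if k = i then X (i + 1) * p else 0)) := by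
        congr 1; funext k; exact h1 k
    _ = (∑ᶠ k : ℕ, X (k + 1) * pderiv k p * X i)
        + ∑ᶠ k : ℕ, (if k = i then X (i + 1) * p else 0) := by
        refine finsum_add_distrib ?_ ?_
        · refine (dx_supp_fin p).subset ?_
          intro k hk
          simp only [Function.mem_support] at *
          intro h0
          exact hk (by rw [h0, zero_mul])
        · refine Set.Finite.subset (Set.finite_singleton i) ?_
          intro k hk
          simp only [Function.mem_support] at hk
          by_contra hne
          exact hk (if_neg hne)
    _ = dx p * X i + p * X (i + 1) := by
        show _ + _ = _ + _
        congr 1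
        · rw [← finsum_mul' _ _ (dx_supp_fin p)]
          rfl
        · rw [finsum_eq_single _ i (fun k hk => if_neg hk), if_pos rfl]
          ring

lemma dx_X (i : ℕ) : dx (X i) = X (i + 1) := by
  have := dx_mul_X 1 i
  rw [one_mul, dx_one, zero_mul, zero_add, one_mul] at this
  exact this

lemma coeff_pderiv (i : ℕ) (m : ℕ →₀ ℕ) (f : MvPolynomial ℕ ℝ) :
    coeff m (pderiv i f) = ((m i : ℝ) + 1) * coeff (m + Finsupp.single i 1) f := by
  induction f using MvPolynomial.induction_on' with
  | monomial s a =>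
    rw [pderiv_monomial, coeff_monomial, coeff_monomial]
    by_cases hs : s = m + Finsupp.single i 1
    · have h1 : s - Finsupp.single i 1 = m := by
        rw [hs]; exact add_tsub_cancel_right m _
      have h2 : s i = m i + 1 := by
        rw [hs]; simp [Finsupp.add_apply, Finsupp.single_eq_same]
      rw [if_pos h1, if_pos hs, h2]
      push_cast; ring
    · rw [if_neg hs]
      by_cases h1 : s - Finsupp.single i 1 = m
      · rw [if_pos h1]
        have hsi : s i = 0 := by
          by_contra hne
          apply hs
          ext j
          by_cases hj : j = i
          · subst hj
            have h3 := DFunLike.congr_fun h1 j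
            simp only [Finsupp.tsub_apply, Finsupp.single_eq_same] at h3
            simp only [Finsupp.add_apply, Finsupp.single_eq_same]
            omega
          · have h3 := DFunLike.congr_fun h1 j
            simp only [Finsupp.tsub_apply, Finsupp.single_eq_of_ne' (Ne.symm hj)] at h3
            simp only [Finsupp.add_apply, Finsupp.single_eq_of_ne' (Ne.symm hj)]
            omega
        rw [hsi]
        push_cast; ring
      · rw [if_neg h1, mul_zero]
  | add p q hp hq =>
    rw [map_add, coeff_add, coeff_add, hp, hq, mul_add]

lemma dx_eq_sum (f : MvPolynomial ℕ ℝ) (N : ℕ) (hN : f.vars ⊆ Finset.range N) :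
    dx f = ∑ k ∈ Finset.range N, X (k + 1) * pderiv k f := by
  unfold dx
  refine finsum_eq_finset_sum_of_support_subset _ ?_
  exact (dx_support f).trans (by exact_mod_cast hN)

lemma dx_ker_aux : ∀ N : ℕ, ∀ f : MvPolynomial ℕ ℝ,
    (∀ m ∈ f.support, ∀ j, N ≤ j → m j = 0) → dx f = 0 → coeff 0 f = 0 → f = 0 := by
  intro N
  induction N with
  | zero =>
    intro f hsup hdx h0
    ext m
    by_cases hm : m = 0
    · rw [hm]; simpa using h0
    · rw [coeff_zero]
      by_contra hne
      apply hm
      ext j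
      exact hsup m (by simpa [MvPolynomial.mem_support_iff] using hne) j (Nat.zero_le j)
  | succ N ih =>
    intro f hsup hdx h0
    have hvars : f.vars ⊆ Finset.range (N + 1) := by
      intro k hk
      rw [mem_vars] at hk
      obtain ⟨d, hd, hkd⟩ := hk
      rw [Finset.mem_range]
      by_contra hge
      exact (Finsupp.mem_support_iff.mp hkd) (hsup d hd k (by omega))
    -- pderiv N f = 0
    have hpd : pderiv N f = 0 := by
      ext m
      rw [coeff_zero]
      have hc := congrArg (coeff (Finsupp.single (N + 1) 1 + m)) hdx
      rw [dx_eq_sum f (N + 1) hvars, coeff_zero, coeff_sum] at hc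
      rw [Finset.sum_eq_single N] at hc
      · rwa [coeff_X_mul] at hc
      · intro k hk hkN
        rw [Finset.mem_range] at hk
        have hklt : k < N := by omega
        -- coeff (single (N+1) 1 + m) (X (k+1) * pderiv k f) = 0
        rw [MvPolynomial.coeff_X_mul']
        by_cases hmem : k + 1 ∈ (Finsupp.single (N + 1) 1 + m).support
        · rw [if_pos hmem, coeff_pderiv]
          have : coeff ((Finsupp.single (N + 1) 1 + m - Finsupp.single (k + 1) 1)
              + Finsupp.single k 1) f = 0 := by
            by_contra hne
            have hmm := hsup _ (MvPolynomial.mem_support_iff.mpr hne) (N + 1) le_rfl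
            simp only [Finsupp.add_apply, Finsupp.tsub_apply,
              Finsupp.single_eq_same, Finsupp.single_eq_of_ne' (show (k+1) ≠ (N+1) by omega),
              Finsupp.single_eq_of_ne' (show k ≠ (N+1) by omega)] at hmm
            omega
          rw [this, mul_zero]
        · rw [if_neg hmem]
      · intro hN
        exact absurd (Finset.mem_range.mpr (by omega)) hN
    have hsupN : ∀ m ∈ f.support, ∀ j, N ≤ j → m j = 0 := by
      intro m hm j hj
      rcases Nat.lt_or_ge N j with h | h
      · exact hsup m hm j (by omega)
      · have hjN : j = N := by omega
        subst hjN
        by_contra hne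
        have h1 : Finsupp.single j 1 ≤ m := by
          rw [Finsupp.single_le_iff]; omega
        have h2 : coeff ((m - Finsupp.single j 1) + Finsupp.single j 1) f = 0 := by
          have := congrArg (coeff (m - Finsupp.single j 1)) hpd
          rw [_root_.coeff_pderiv, coeff_zero] at this
          have hpos : ∀ n : ℕ, (n : ℝ) + 1 ≠ 0 := fun n => Nat.cast_add_one_ne_zero n
          exact (mul_eq_zero.mp this).resolve_left (hpos _)
        rw [tsub_add_cancel_of_le h1] at h2
        exact (MvPolynomial.mem_support_iff.mp hm) h2
    exact ih f hsupN hdx h0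

lemma dx_ker (f : MvPolynomial ℕ ℝ) (hdx : dx f = 0) (h0 : coeff 0 f = 0) : f = 0 := by
  obtain ⟨N, hN⟩ : ∃ N, ∀ m ∈ f.support, ∀ j, N ≤ j → m j = 0 := by
    classical
    refine ⟨(f.support.sup fun m => (m.support.sup id) + 1), fun m hm j hj => ?_⟩
    by_contra hne
    have h1 : j ∈ m.support := Finsupp.mem_support_iff.mpr hne
    have h2 : j + 1 ≤ m.support.sup id + 1 := by
      have h4 := Finset.le_sup (f := id) h1
      simp only [id_eq] at h4
      omega
    have h3 : m.support.sup id + 1 ≤ f.support.sup fun m => (m.support.sup id) + 1 :=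
      Finset.le_sup (f := fun m => (m.support.sup id) + 1) hm
    omega
  exact dx_ker_aux N f hN hdx h0

lemma dxP_coeff (p : Polynomial (MvPolynomial ℕ ℝ)) (n : ℕ) :
    (dxP p).coeff n = dx (p.coeff n) := by
  unfold dxP
  rw [Polynomial.sum, Polynomial.finset_sum_coeff]
  have : ∀ i : ℕ, (Polynomial.C (dx (p.coeff i)) * Polynomial.X ^ i).coeff n =
      if i = n then dx (p.coeff i) else 0 := by
    intro i
    rw [Polynomial.C_mul_X_pow_eq_monomial, Polynomial.coeff_monomial]
  simp_rw [this]
  rw [Finset.sum_ite_eq' p.support n (fun i => dx (p.coeff i))]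
  by_cases hn : n ∈ p.support
  · rw [if_pos hn]
  · rw [if_neg hn, Polynomial.notMem_support_iff.mp hn, dx_zero]

lemma dxP_C (a : MvPolynomial ℕ ℝ) : dxP (Polynomial.C a) = Polynomial.C (dx a) := by
  ext n
  rw [dxP_coeff, Polynomial.coeff_C, Polynomial.coeff_C]
  by_cases hn : n = 0
  · rw [if_pos hn, if_pos hn]
  · rw [if_neg hn, if_neg hn, dx_zero]

lemma dxP_one : dxP 1 = 0 := by
  rw [← Polynomial.C_1, dxP_C, dx_one, Polynomial.C_0]

lemma dxP_zero : dxP 0 = 0 := by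
  unfold dxP
  exact Polynomial.sum_zero_index _

lemma dxP_uniq (p q : Polynomial (MvPolynomial ℕ ℝ)) (hp : NoConst p) (hq : NoConst q)
    (h : dxP p = dxP q) : p = q := by
  refine Polynomial.ext fun n => ?_
  have h1 : dx (p.coeff n - q.coeff n) = 0 := by
    rw [dx_sub, ← dxP_coeff, ← dxP_coeff, h, sub_self]
  have h2 : coeff 0 (p.coeff n - q.coeff n) = 0 := by
    rw [coeff_sub, hp n, hq n, sub_self]
  have := dx_ker _ h1 h2
  exact sub_eq_zero.mp this

lemma NoConst_CX0 : NoConst (Polynomial.C (X 0) : Polynomial (MvPolynomial ℕ ℝ)) := by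
  intro i
  rw [Polynomial.coeff_C]
  by_cases hi : i = 0
  · rw [if_pos hi, coeff_zero_X]
  · rw [if_neg hi, coeff_zero]

lemma dxP_CX0 : dxP (Polynomial.C (X 0) : Polynomial (MvPolynomial ℕ ℝ)) =
    Polynomial.C (X 1) := by
  rw [dxP_C, dx_X]

lemma T0_eq (R T : ℕ → Polynomial (MvPolynomial ℕ ℝ)) (hR : IsGD R) (hT : IsT R T) :
    T 0 = Polynomial.C (X 0) := by
  refine dxP_uniq _ _ (hT 0).1 NoConst_CX0 ?_
  rw [dxP_CX0, (hT 0).2, hR.1, mul_one]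

lemma R1_eq (R : ℕ → Polynomial (MvPolynomial ℕ ℝ)) (hR : IsGD R) :
    R 1 = Polynomial.C (X 0) := by
  obtain ⟨hR0, hnc, hrec⟩ := hR
  have h0 := hrec 0
  rw [hR0, dxP_one, dxP_zero, dxP_zero] at h0
  norm_num at h0
  refine dxP_uniq _ _ (hnc 1 le_rfl) NoConst_CX0 ?_
  rw [dxP_CX0, h0]

lemma dxP_add (p q : Polynomial (MvPolynomial ℕ ℝ)) : dxP (p + q) = dxP p + dxP q := by
  refine Polynomial.ext fun n => ?_
  rw [Polynomial.coeff_add, dxP_coeff, dxP_coeff, dxP_coeff, Polynomial.coeff_add, dx_add]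

lemma dxP_monomial (n : ℕ) (a : MvPolynomial ℕ ℝ) :
    dxP (Polynomial.C a * Polynomial.X ^ n) = Polynomial.C (dx a) * Polynomial.X ^ n := by
  refine Polynomial.ext fun i => ?_
  rw [dxP_coeff, Polynomial.C_mul_X_pow_eq_monomial, Polynomial.C_mul_X_pow_eq_monomial,
    Polynomial.coeff_monomial, Polynomial.coeff_monomial]
  by_cases h : n = i
  · rw [if_pos h, if_pos h]
  · rw [if_neg h, if_neg h, dx_zero]

section D0lemmas

variable {S : Type*} [CommRing S]

local notation "e0" => (Finsupp.single 0 1 : ℕ →₀ ℕ)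
local notation "cf" => MvPowerSeries.coeff (R := S)

lemma coeff_D0 (f : MvPowerSeries ℕ S) (m : ℕ →₀ ℕ) :
    cf m (D0 f) = (m 0 + 1 : ℕ) • cf (m + e0) f := rfl

lemma D0_add (f g : MvPowerSeries ℕ S) : D0 (f + g) = D0 f + D0 g := by
  refine MvPowerSeries.ext fun m => ?_
  rw [map_add, coeff_D0, coeff_D0, coeff_D0, map_add, smul_add]

lemma D0_C (s : S) : D0 (MvPowerSeries.C (σ := ℕ) (R := S) s) = 0 := by
  refine MvPowerSeries.ext fun m => ?_
  rw [coeff_D0, (MvPowerSeries.coeff (R := S) m).map_zero, MvPowerSeries.coeff_C]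
  rw [if_neg, smul_zero]
  intro h
  have := DFunLike.congr_fun h 0
  simp [Finsupp.add_apply, Finsupp.single_eq_same] at this

lemma D0_one : D0 (1 : MvPowerSeries ℕ S) = 0 := by
  rw [← map_one (MvPowerSeries.C (σ := ℕ) (R := S))]
  exact D0_C 1

lemma D0_X0 : D0 (MvPowerSeries.X 0 : MvPowerSeries ℕ S) = 1 := by
  refine MvPowerSeries.ext fun m => ?_
  rw [coeff_D0, MvPowerSeries.coeff_X, MvPowerSeries.coeff_one]
  by_cases hm : m = 0
  · rw [if_pos, if_pos hm]
    · subst hm; simp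
    · rw [hm, zero_add]
  · rw [if_neg, if_neg hm, smul_zero]
    intro h
    apply hm
    exact add_right_cancel (by rw [h, zero_add] : m + e0 = 0 + e0)

lemma D0_X_ne {n : ℕ} (hn : n ≠ 0) : D0 (MvPowerSeries.X n : MvPowerSeries ℕ S) = 0 := by
  refine MvPowerSeries.ext fun m => ?_
  rw [coeff_D0, (MvPowerSeries.coeff (R := S) m).map_zero, MvPowerSeries.coeff_X]
  rw [if_neg, smul_zero]
  intro h
  have := DFunLike.congr_fun h 0
  simp only [Finsupp.add_apply, Finsupp.single_eq_same, Finsupp.single_apply,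
    if_neg hn] at this
  omega

private lemma antidiag_shift_sum (M : ℕ →₀ ℕ) (h : (ℕ →₀ ℕ) → (ℕ →₀ ℕ) → S) :
    ∑ x ∈ Finset.HasAntidiagonal.antidiagonal (M + e0), x.1 0 • h x.1 x.2
      = ∑ y ∈ Finset.HasAntidiagonal.antidiagonal M, (y.1 0 + 1) • h (y.1 + e0) y.2 := by
  classical
  rw [← Finset.sum_filter_of_ne (p := fun x => x.1 0 ≠ 0)
    (fun x _ hx => by intro h0; apply hx; rw [h0, zero_smul])]
  refine Finset.sum_nbij' (fun x => (x.1 - e0, x.2)) (fun y => (y.1 + e0, y.2)) ?_ ?_ ?_ ?_ ?_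
  · rintro ⟨a, b⟩ hab
    simp only [Finset.mem_filter, Finset.HasAntidiagonal.mem_antidiagonal] at hab
    obtain ⟨hab1, hab2⟩ := hab
    have hle : e0 ≤ a := by
      rw [Finsupp.single_le_iff]
      omega
    rw [Finset.HasAntidiagonal.mem_antidiagonal]
    have : a - e0 + b + e0 = M + e0 := by
      rw [add_right_comm, tsub_add_cancel_of_le hle, hab1]
    exact add_right_cancel this
  · rintro ⟨a, b⟩ hab
    rw [Finset.HasAntidiagonal.mem_antidiagonal] at hab
    simp only [Finset.mem_filter, Finset.HasAntidiagonal.mem_antidiagonal]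
    constructor
    · rw [add_right_comm, hab]
    · simp [Finsupp.add_apply, Finsupp.single_eq_same]
  · rintro ⟨a, b⟩ hab
    simp only [Finset.mem_filter, Finset.HasAntidiagonal.mem_antidiagonal] at hab
    have hle : e0 ≤ a := by
      rw [Finsupp.single_le_iff]
      omega
    simp only [Prod.mk.injEq]
    exact ⟨tsub_add_cancel_of_le hle, trivial⟩
  · rintro ⟨a, b⟩ _
    simp only [Prod.mk.injEq]
    exact ⟨add_tsub_cancel_right a e0, trivial⟩
  · rintro ⟨a, b⟩ hab
    simp only [Finset.mem_filter, Finset.HasAntidiagonal.mem_antidiagonal] at hab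
    obtain ⟨hab1, hab2⟩ := hab
    have hle : e0 ≤ a := by
      rw [Finsupp.single_le_iff]
      omega
    have ha0 : (a - e0) 0 + 1 = a 0 := by
      simp only [Finsupp.tsub_apply, Finsupp.single_eq_same]
      omega
    rw [ha0, tsub_add_cancel_of_le hle]

lemma D0_sub (f g : MvPowerSeries ℕ S) : D0 (f - g) = D0 f - D0 g := by
  refine MvPowerSeries.ext fun m => ?_
  rw [map_sub, coeff_D0, coeff_D0, coeff_D0, map_sub, smul_sub]

lemma D0_zero : D0 (0 : MvPowerSeries ℕ S) = 0 := by
  simpa using D0_C (0 : S)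

lemma coeff_X_mul_eq_zero {M : ℕ →₀ ℕ} {n : ℕ} (f : MvPowerSeries ℕ S) (h : M n = 0) :
    cf M (MvPowerSeries.X n * f) = 0 := by
  classical
  rw [MvPowerSeries.coeff_mul]
  refine Finset.sum_eq_zero fun x hx => ?_
  rw [Finset.HasAntidiagonal.mem_antidiagonal] at hx
  rw [MvPowerSeries.coeff_X]
  by_cases h1 : x.1 = Finsupp.single n 1
  · exfalso
    have h2 := DFunLike.congr_fun hx n
    rw [h1] at h2
    simp only [Finsupp.add_apply, Finsupp.single_eq_same] at h2
    omega
  · rw [if_neg h1, zero_mul]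

lemma D0_mul (f g : MvPowerSeries ℕ S) : D0 (f * g) = D0 f * g + f * D0 g := by
  classical
  refine MvPowerSeries.ext fun m => ?_
  rw [coeff_D0, map_add, MvPowerSeries.coeff_mul, MvPowerSeries.coeff_mul,
    MvPowerSeries.coeff_mul, Finset.smul_sum]
  have hsplit : ∀ x ∈ Finset.HasAntidiagonal.antidiagonal (m + e0),
      (m 0 + 1 : ℕ) • (cf x.1 f * cf x.2 g)
        = x.1 0 • (cf x.1 f * cf x.2 g) + x.2 0 • (cf x.1 f * cf x.2 g) := by
    intro x hx
    rw [Finset.HasAntidiagonal.mem_antidiagonal] at hx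
    have h0 := DFunLike.congr_fun hx 0
    simp only [Finsupp.add_apply, Finsupp.single_eq_same] at h0
    rw [← add_smul, h0]
  rw [Finset.sum_congr rfl hsplit, Finset.sum_add_distrib]
  congr 1
  · calc ∑ x ∈ Finset.HasAntidiagonal.antidiagonal (m + e0), x.1 0 • (cf x.1 f * cf x.2 g)
        = ∑ y ∈ Finset.HasAntidiagonal.antidiagonal m, (y.1 0 + 1) • (cf (y.1 + e0) f * cf y.2 g) :=
          antidiag_shift_sum m fun a b => cf a f * cf b g
      _ = ∑ p ∈ Finset.HasAntidiagonal.antidiagonal m, cf p.1 (D0 f) * cf p.2 g := by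
          refine Finset.sum_congr rfl fun y _ => ?_
          rw [coeff_D0, smul_mul_assoc]
  · have hswap : ∀ (M : ℕ →₀ ℕ) (h : (ℕ →₀ ℕ) → (ℕ →₀ ℕ) → S),
        ∑ x ∈ Finset.HasAntidiagonal.antidiagonal M, x.2 0 • h x.1 x.2
          = ∑ x ∈ Finset.HasAntidiagonal.antidiagonal M, x.1 0 • h x.2 x.1 := by
      intro M h
      refine Finset.sum_nbij' Prod.swap Prod.swap ?_ ?_ ?_ ?_ ?_ <;>
        simp [Finset.HasAntidiagonal.mem_antidiagonal, add_comm]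
    calc ∑ x ∈ Finset.HasAntidiagonal.antidiagonal (m + e0), x.2 0 • (cf x.1 f * cf x.2 g)
        = ∑ x ∈ Finset.HasAntidiagonal.antidiagonal (m + e0), x.1 0 • (cf x.2 f * cf x.1 g) :=
          hswap (m + e0) fun a b => cf a f * cf b g
      _ = ∑ y ∈ Finset.HasAntidiagonal.antidiagonal m, (y.1 0 + 1) • (cf y.2 f * cf (y.1 + e0) g) :=
          antidiag_shift_sum m fun a b => cf b f * cf a g
      _ = ∑ p ∈ Finset.HasAntidiagonal.antidiagonal m, cf p.1 f * cf p.2 (D0 g) := by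
          refine Finset.sum_nbij' Prod.swap Prod.swap ?_ ?_ ?_ ?_ ?_
          · rintro ⟨a, b⟩ hab
            rw [Finset.HasAntidiagonal.mem_antidiagonal] at hab ⊢
            rw [add_comm]
            exact hab
          · rintro ⟨a, b⟩ hab
            rw [Finset.HasAntidiagonal.mem_antidiagonal] at hab ⊢
            rw [add_comm]
            exact hab
          · rintro ⟨a, b⟩ _; rfl
          · rintro ⟨a, b⟩ _; rfl
          · rintro ⟨a, b⟩ _
            show (a 0 + 1) • (cf b f * cf (a + e0) g) = cf b f * cf a (D0 g)
            rw [coeff_D0, mul_smul_comm]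

end D0lemmas

section chain

variable (u : MvPowerSeries ℕ (PowerSeries ℝ))

lemma D0_algebraMap (r : ℝ) :
    D0 (algebraMap ℝ (MvPowerSeries ℕ (PowerSeries ℝ)) r) = 0 := by
  rw [MvPowerSeries.algebraMap_apply]
  exact D0_C _

lemma D0_aeval (a : MvPolynomial ℕ ℝ) :
    D0 (aeval (fun k => D0^[k] u) a) = aeval (fun k => D0^[k] u) (dx a) := by
  induction a using MvPolynomial.induction_on with
  | C r =>
    rw [aeval_C, dx_C, map_zero]
    exact D0_algebraMap r
  | add p q hp hq =>
    rw [map_add, D0_add, hp, hq, dx_add, map_add]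
  | mul_X p n hp =>
    rw [map_mul, aeval_X, D0_mul, hp, dx_mul_X, map_add, map_mul, map_mul, aeval_X, aeval_X]
    congr 1
    congr 1
    exact (Function.iterate_succ_apply' D0 n u).symm

lemma sb_C (a : MvPolynomial ℕ ℝ) :
    sb u (Polynomial.C a) = aeval (fun k => D0^[k] u) a :=
  Polynomial.eval₂_C _ _

lemma sb_add (p q : Polynomial (MvPolynomial ℕ ℝ)) : sb u (p + q) = sb u p + sb u q :=
  Polynomial.eval₂_add _ _

lemma sb_mul (p q : Polynomial (MvPolynomial ℕ ℝ)) : sb u (p * q) = sb u p * sb u q :=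
  Polynomial.eval₂_mul _ _

lemma sb_one : sb u 1 = 1 := Polynomial.eval₂_one _ _

lemma D0_sb (P : Polynomial (MvPolynomial ℕ ℝ)) : D0 (sb u P) = sb u (dxP P) := by
  induction P using Polynomial.induction_on' with
  | add p q hp hq =>
    rw [sb_add, D0_add, hp, hq, dxP_add, sb_add]
  | monomial n a =>
    rw [← Polynomial.C_mul_X_pow_eq_monomial, dxP_monomial]
    unfold sb substP
    rw [Polynomial.eval₂_mul, Polynomial.eval₂_mul, Polynomial.eval₂_C, Polynomial.eval₂_C,
      Polynomial.eval₂_X_pow, ← map_pow, D0_mul, D0_C, mul_zero, add_zero]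
    have := D0_aeval u a
    simp only [AlgHom.toRingHom_eq_coe, RingHom.coe_coe]
    rw [this]

lemma sb_dxT (R T : ℕ → Polynomial (MvPolynomial ℕ ℝ)) (hT : IsT R T) (n : ℕ) :
    D0 (sb u (T n)) = D0 u * sb u (R n) := by
  rw [D0_sb, (hT n).2, sb_mul, sb_C, aeval_X]
  show D0^[1] u * _ = _
  rw [Function.iterate_one]

lemma sb_CX0 : sb u (Polynomial.C (X 0)) = u := by
  rw [sb_C, aeval_X]
  exact Function.iterate_zero_apply D0 u

end chain


/-- if `u ∈ ℝ[[λ]][[t₀,t₁,…]]` satisfies the string equation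
`u = Σ_{k≥1} t_k R_k[u] + t₀` (coefficientwise), then
`∂/∂t₀ (Σ_{n≥0} (t_n − δ_{n,1}) T_n[u]) = u`. -/
theorem mean_field_potential (R T : ℕ → Polynomial (MvPolynomial ℕ ℝ))
    (hR : IsGD R) (hT : IsT R T)
    (u : MvPowerSeries ℕ (PowerSeries ℝ))
    (hu : ∀ m : ℕ →₀ ℕ,
      MvPowerSeries.coeff (R := PowerSeries ℝ) m u =
        (∑ᶠ k : ℕ, MvPowerSeries.coeff (R := PowerSeries ℝ) m
            (MvPowerSeries.X (k + 1) * sb u (R (k + 1))))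
        + MvPowerSeries.coeff (R := PowerSeries ℝ) m (MvPowerSeries.X 0)) :
    D0 (fun m => ∑ᶠ n : ℕ, MvPowerSeries.coeff (R := PowerSeries ℝ) m
          ((MvPowerSeries.X n - if n = 1 then 1 else 0) * sb u (T n))
        : MvPowerSeries ℕ (PowerSeries ℝ)) = u := by
  classical
  obtain ⟨hR0, hRnc, hrec⟩ := hR
  have hT0 : T 0 = Polynomial.C (X 0) := T0_eq R T ⟨hR0, hRnc, hrec⟩ hT
  have hR1 : R 1 = Polynomial.C (X 0) := R1_eq R ⟨hR0, hRnc, hrec⟩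
  set cf : (ℕ →₀ ℕ) → MvPowerSeries ℕ (PowerSeries ℝ) →ₗ[PowerSeries ℝ] PowerSeries ℝ :=
    MvPowerSeries.coeff (R := PowerSeries ℝ) with hcf
  set e0 : ℕ →₀ ℕ := Finsupp.single 0 1 with he0
  set g : ℕ → MvPowerSeries ℕ (PowerSeries ℝ) := fun n =>
    (MvPowerSeries.X n - if n = 1 then 1 else 0) * sb u (T n) with hg
  set w : ℕ → MvPowerSeries ℕ (PowerSeries ℝ) := fun n => D0 u * sb u (R n) with hw
  -- derivative of each summand
  have hD0g : ∀ n, D0 (g n) = (if n = 0 then u else 0)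
      + (MvPowerSeries.X n - if n = 1 then 1 else 0) * w n := by
    intro n
    rw [hg, D0_mul, sb_dxT u R T hT n, hw]
    congr 1
    by_cases h0 : n = 0
    · subst h0
      rw [if_neg (by norm_num), if_pos rfl, sub_zero, D0_X0, one_mul, hT0, sb_CX0]
    · rw [if_neg h0]
      have hz : D0 ((MvPowerSeries.X n - if n = 1 then 1 else 0) :
          MvPowerSeries ℕ (PowerSeries ℝ)) = 0 := by
        rw [D0_sub, D0_X_ne h0]
        by_cases h1 : n = 1
        · rw [if_pos h1, D0_one, sub_self]
        · rw [if_neg h1, D0_zero, sub_self]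
      rw [hz, zero_mul]
  -- the string equation as an identity of power series
  set W : MvPowerSeries ℕ (PowerSeries ℝ) := fun M =>
    ∑ᶠ k : ℕ, cf M (MvPowerSeries.X (k + 1) * sb u (R (k + 1))) with hWdef
  have huW : u = W + MvPowerSeries.X 0 := by
    refine MvPowerSeries.ext fun M => ?_
    rw [map_add, hu M]
    congr 1
  refine MvPowerSeries.ext fun m => ?_
  set sA : Finset ℕ := (m + e0).support ∪ {0, 1} with hsA
  have h0A : 0 ∈ sA := by simp [hsA]
  have h1A : 1 ∈ sA := by simp [hsA]
  set sk : Finset ℕ := m.support.image Nat.pred with hsk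
  -- step 1
  have step1 : cf m (D0 (fun M => ∑ᶠ n : ℕ, cf M (g n) : MvPowerSeries ℕ (PowerSeries ℝ)))
      = ∑ n ∈ sA, cf m (D0 (g n)) := by
    refine (coeff_D0 _ m).trans ?_
    have hA : cf (m + e0) (fun M => ∑ᶠ n : ℕ, cf M (g n) : MvPowerSeries ℕ (PowerSeries ℝ))
        = ∑ᶠ n : ℕ, cf (m + e0) (g n) := rfl
    rw [hA]
    have hsupg : (Function.support fun n => cf (m + e0) (g n)) ⊆ ↑sA := by
      intro n hn
      simp only [Function.mem_support] at hn
      by_contra hns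
      simp only [hsA, Finset.coe_union, Set.mem_union, Finset.mem_coe,
        Finsupp.mem_support_iff, Finset.coe_insert, Set.mem_insert_iff,
        Finset.coe_singleton, Set.mem_singleton_iff, not_or, not_not] at hns
      obtain ⟨hn0, _, hn1⟩ := hns
      apply hn
      rw [hg]
      show cf (m + e0) ((MvPowerSeries.X n - if n = 1 then 1 else 0) * sb u (T n)) = 0
      rw [if_neg hn1, sub_zero]
      exact coeff_X_mul_eq_zero _ hn0
    rw [finsum_eq_finset_sum_of_support_subset _ hsupg, Finset.smul_sum]
    exact Finset.sum_congr rfl fun n _ => (coeff_D0 (g n) m).symm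
  -- step 2
  have step2 : ∑ n ∈ sA, cf m (D0 (g n))
      = cf m u + ∑ n ∈ sA, cf m ((MvPowerSeries.X n - if n = 1 then 1 else 0) * w n) := by
    have : ∀ n ∈ sA, cf m (D0 (g n)) = (if n = 0 then cf m u else 0)
        + cf m ((MvPowerSeries.X n - if n = 1 then 1 else 0) * w n) := by
      intro n _
      rw [hD0g n, map_add]
      congr 1
      by_cases h0 : n = 0
      · rw [if_pos h0, if_pos h0]
      · rw [if_neg h0, if_neg h0, map_zero]
    rw [Finset.sum_congr rfl this, Finset.sum_add_distrib,
      Finset.sum_ite_eq' sA 0 (fun _ => cf m u), if_pos h0A]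
  -- step 3
  have step3 : ∑ n ∈ sA, cf m ((MvPowerSeries.X n - if n = 1 then 1 else 0) * w n)
      = (∑ n ∈ sA, cf m (MvPowerSeries.X n * w n)) - cf m (D0 u * u) := by
    have hterm : ∀ n ∈ sA, cf m ((MvPowerSeries.X n - if n = 1 then 1 else 0) * w n)
        = cf m (MvPowerSeries.X n * w n) - (if n = 1 then cf m (w 1) else 0) := by
      intro n _
      by_cases h1 : n = 1
      · subst h1
        rw [if_pos rfl, if_pos rfl, sub_mul, one_mul, map_sub]
      · rw [if_neg h1, if_neg h1, sub_zero, sub_zero]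
    rw [Finset.sum_congr rfl hterm, Finset.sum_sub_distrib,
      Finset.sum_ite_eq' sA 1 (fun _ => cf m (w 1)), if_pos h1A]
    congr 2
    rw [hw]
    show D0 u * sb u (R 1) = D0 u * u
    rw [hR1, sb_CX0]
  -- step 4
  have hmsubA : m.support ⊆ sA := by
    intro n hn
    rw [Finsupp.mem_support_iff] at hn
    apply Finset.mem_union_left
    rw [Finsupp.mem_support_iff]
    have := Finsupp.add_apply m e0 n
    intro hc
    rw [hc] at this
    omega
  have step4 : ∑ n ∈ sA, cf m (MvPowerSeries.X n * w n)
      = ∑ n ∈ m.support, cf m (MvPowerSeries.X n * w n) := by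
    refine (Finset.sum_subset hmsubA fun n _ hn => ?_).symm
    rw [Finsupp.mem_support_iff, not_not] at hn
    exact coeff_X_mul_eq_zero _ hn
  -- the W coefficient sums
  have hW : ∀ q : ℕ →₀ ℕ, q ≤ m →
      cf q W = ∑ k ∈ sk, cf q (MvPowerSeries.X (k + 1) * sb u (R (k + 1))) := by
    intro q hq
    have hAq : cf q W = ∑ᶠ k : ℕ, cf q (MvPowerSeries.X (k + 1) * sb u (R (k + 1))) := rfl
    rw [hAq]
    refine finsum_eq_finset_sum_of_support_subset _ ?_
    intro k hk
    simp only [Function.mem_support] at hk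
    have hq1 : q (k + 1) ≠ 0 := by
      intro hc
      exact hk (coeff_X_mul_eq_zero _ hc)
    have hm1 : m (k + 1) ≠ 0 := by
      have := Finsupp.le_def.mp hq (k + 1)
      omega
    simp only [hsk, Finset.coe_image, Set.mem_image, Finset.mem_coe,
      Finsupp.mem_support_iff]
    exact ⟨k + 1, hm1, rfl⟩
  -- step 5
  have step5 : cf m (D0 u * W)
      = ∑ k ∈ sk, cf m (MvPowerSeries.X (k + 1) * w (k + 1)) := by
    rw [MvPowerSeries.coeff_mul]
    have hterm : ∀ x ∈ Finset.HasAntidiagonal.antidiagonal m,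
        cf x.1 (D0 u) * cf x.2 W
          = ∑ k ∈ sk, cf x.1 (D0 u) * cf x.2 (MvPowerSeries.X (k + 1) * sb u (R (k + 1))) := by
      intro x hx
      rw [Finset.HasAntidiagonal.mem_antidiagonal] at hx
      have hle : x.2 ≤ m := by
        rw [← hx]
        exact le_add_self
      rw [hW x.2 hle, Finset.mul_sum]
    rw [Finset.sum_congr rfl hterm, Finset.sum_comm]
    refine Finset.sum_congr rfl fun k _ => ?_
    rw [← MvPowerSeries.coeff_mul]
    congr 1
    rw [hw]
    show D0 u * (MvPowerSeries.X (k + 1) * sb u (R (k + 1)))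
      = MvPowerSeries.X (k + 1) * (D0 u * sb u (R (k + 1)))
    rw [mul_left_comm]
  -- step 6
  have step6 : cf m (D0 u * u) = ∑ n ∈ m.support, cf m (MvPowerSeries.X n * w n) := by
    have hsplit : D0 u * u = D0 u * W + D0 u * MvPowerSeries.X 0 := by
      rw [← mul_add, ← huW]
    rw [hsplit, map_add, step5]
    have himg : ∑ k ∈ sk, cf m (MvPowerSeries.X (k + 1) * w (k + 1))
        = ∑ n ∈ sk.image Nat.succ, cf m (MvPowerSeries.X n * w n) := by
      rw [Finset.sum_image (fun x _ y _ h => Nat.succ_injective h)]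
    have hX0 : cf m (D0 u * MvPowerSeries.X 0) = cf m (MvPowerSeries.X 0 * w 0) := by
      congr 1
      rw [hw]
      show D0 u * MvPowerSeries.X 0 = MvPowerSeries.X 0 * (D0 u * sb u (R 0))
      rw [hR0, sb_one, mul_one, mul_comm]
    rw [himg, hX0, add_comm, ← Finset.sum_insert
      (f := fun n => cf m (MvPowerSeries.X n * w n))
      (by simp [Nat.succ_ne_zero] : (0 : ℕ) ∉ sk.image Nat.succ)]
    refine (Finset.sum_subset ?_ ?_).symm
    · intro n hn
      rw [Finsupp.mem_support_iff] at hn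
      rcases n with _ | k
      · exact Finset.mem_insert_self 0 _
      · refine Finset.mem_insert_of_mem ?_
        refine Finset.mem_image.mpr ⟨k, ?_, rfl⟩
        rw [hsk]
        refine Finset.mem_image.mpr ⟨k + 1, ?_, rfl⟩
        rw [Finsupp.mem_support_iff]
        exact hn
    · intro n _ hn
      rw [Finsupp.mem_support_iff, not_not] at hn
      exact coeff_X_mul_eq_zero _ hn
  -- combine
  rw [step1, step2, step3, step4, ← step6]
  ring
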